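/- Let n ≥ 1 be an integer and ψ ∈ ℂ² any vector. Then (1/2) Σ_{α=0}^{3} ⟨ψ, σ_α ψ⟩^{2n} = ⟨Ψ, Λ^{(n)} Ψ⟩, where Ψ = (ψ ⊗ ψ̄)^{⊗n} ∈ (ℂ²)^{⊗2n} with ψ̄ the entrywise complex conjugate of ψ, and ⟨·,·⟩ is the standard Hermitian inner product (note each ⟨ψ, σ_α ψ⟩ is real since σ_α is Hermitian). -/

import Mathlib

open scoped Matrix ComplexConjugate

noncomputable section

/-- The four Pauli matrices: `σ 0 = 1`, `σ 1 = σ_x`, `σ 2 = σ_y`, `σ 3 = σ_z`. -/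
def σ (α : Fin 4) : Matrix (Fin 2) (Fin 2) ℂ :=
  if α = 0 then 1
  else if α = 1 then !![0, 1; 1, 0]
  else if α = 2 then !![0, -Complex.I; Complex.I, 0]
  else !![1, 0; 0, -1]

/-- `Λ^{(n)} = (1/2) Σ_{α=0}^{3} (σ_α ⊗ σ̄_α)^{⊗n}`, an operator on `(ℂ²)^{⊗2n}`:
the `k`-th tensor factor of `σ_α ⊗ σ̄_α` sits on qubits `2k` and `2k+1`. -/
def Lambda (n : ℕ) : Matrix (Fin (2*n) → Fin 2) (Fin (2*n) → Fin 2) ℂ :=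
  fun s t => ((1:ℂ)/2) * ∑ α : Fin 4, ∏ k : Fin n,
    σ α (s ⟨2*k.val, by have := k.isLt; omega⟩) (t ⟨2*k.val, by have := k.isLt; omega⟩) *
    conj (σ α (s ⟨2*k.val+1, by have := k.isLt; omega⟩) (t ⟨2*k.val+1, by have := k.isLt; omega⟩))

/-- The replica vector `Ψ = (ψ ⊗ ψ̄)^{⊗n} ∈ (ℂ²)^{⊗2n}`: qubit `2k` carries `ψ` and
qubit `2k+1` carries its entrywise complex conjugate `ψ̄`. -/
def replicaVec (n : ℕ) (ψ : Fin 2 → ℂ) : (Fin (2*n) → Fin 2) → ℂ :=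
  fun s => ∏ k : Fin n,
    ψ (s ⟨2*k.val, by have := k.isLt; omega⟩) *
    conj (ψ (s ⟨2*k.val+1, by have := k.isLt; omega⟩))

/-- Interleaving equivalence. -/
def pairEquiv (n : ℕ) : (Fin n → Fin 2 × Fin 2) ≃ (Fin (2*n) → Fin 2) where
  toFun g j := if j.val % 2 = 0 then (g ⟨j.val / 2, by have := j.isLt; omega⟩).1
    else (g ⟨j.val / 2, by have := j.isLt; omega⟩).2
  invFun s k := (s ⟨2*k.val, by have := k.isLt; omega⟩, s ⟨2*k.val+1, by have := k.isLt; omega⟩)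
  left_inv g := by
    funext k
    have h1 : (2 * k.val) % 2 = 0 := by omega
    have h2 : (2 * k.val + 1) % 2 = 1 := by omega
    have h3 : (2 * k.val) / 2 = k.val := by omega
    have h4 : (2 * k.val + 1) / 2 = k.val := by omega
    ext <;> simp [h1, h2, h3, h4]
  right_inv s := by
    funext j
    by_cases h : j.val % 2 = 0
    · have : 2 * (j.val / 2) = j.val := by omega
      simp only [h, if_true]
      congr 1; exact Fin.ext this
    · have : 2 * (j.val / 2) + 1 = j.val := by omega
      simp only [h, if_false]
      congr 1; exact Fin.ext this

lemma pairEquiv_even (n : ℕ) (g : Fin n → Fin 2 × Fin 2) (k : Fin n) :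
    pairEquiv n g ⟨2*k.val, by have := k.isLt; omega⟩ = (g k).1 := by
  have h1 : (2 * k.val) % 2 = 0 := by omega
  have h3 : (2 * k.val) / 2 = k.val := by omega
  simp [pairEquiv, h1, h3]

lemma pairEquiv_odd (n : ℕ) (g : Fin n → Fin 2 × Fin 2) (k : Fin n) :
    pairEquiv n g ⟨2*k.val+1, by have := k.isLt; omega⟩ = (g k).2 := by
  have h1 : (2 * k.val + 1) % 2 = 1 := by omega
  have h3 : (2 * k.val + 1) / 2 = k.val := by omega
  simp [pairEquiv, h1, h3]

/-- Key factorization lemma. -/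
lemma key2 (n : ℕ) (F : (Fin 2 × Fin 2) → (Fin 2 × Fin 2) → ℂ) :
    ∑ s : Fin (2*n) → Fin 2, ∑ t : Fin (2*n) → Fin 2,
      ∏ k : Fin n, F (s ⟨2*k.val, by have := k.isLt; omega⟩, s ⟨2*k.val+1, by have := k.isLt; omega⟩)
        (t ⟨2*k.val, by have := k.isLt; omega⟩, t ⟨2*k.val+1, by have := k.isLt; omega⟩)
    = (∑ p : Fin 2 × Fin 2, ∑ q : Fin 2 × Fin 2, F p q) ^ n := by
  have hp : (∑ p : Fin 2 × Fin 2, ∑ q : Fin 2 × Fin 2, F p q)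
      = ∑ r : (Fin 2 × Fin 2) × (Fin 2 × Fin 2), F r.1 r.2 := by
    exact (Fintype.sum_prod_type (f := fun r : (Fin 2 × Fin 2) × (Fin 2 × Fin 2) => F r.1 r.2)).symm
  rw [hp]
  rw [Fintype.sum_pow, ← Fintype.sum_prod_type']
  rw [← Equiv.sum_comp ((Equiv.arrowProdEquivProdArrow (Fin n) (fun _ => Fin 2 × Fin 2)
        (fun _ => Fin 2 × Fin 2)).trans ((pairEquiv n).prodCongr (pairEquiv n)))]
  apply Fintype.sum_congr
  intro g
  apply Fintype.prod_congr
  intro k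
  simp [pairEquiv_even, pairEquiv_odd, Equiv.arrowProdEquivProdArrow]

lemma sum3 {A B C : Type*} [Fintype A] [Fintype B] [Fintype C] (f : A → B → C → ℂ) :
    ∑ a : A, ∑ b : B, ∑ c : C, f a b c = ∑ c : C, ∑ b : B, ∑ a : A, f a b c := by
  trans ∑ b : B, ∑ a : A, ∑ c : C, f a b c
  · exact Finset.sum_comm
  trans ∑ b : B, ∑ c : C, ∑ a : A, f a b c
  · exact Finset.sum_congr rfl fun _ _ => Finset.sum_comm
  exact Finset.sum_comm

lemma herm (α : Fin 4) (ψ : Fin 2 → ℂ) :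
    conj (star ψ ⬝ᵥ (σ α *ᵥ ψ)) = star ψ ⬝ᵥ (σ α *ᵥ ψ) := by
  fin_cases α <;>
    simp [σ, dotProduct, Matrix.mulVec, Fin.sum_univ_two, Matrix.one_apply,
      map_add, map_mul, Complex.conj_conj, Complex.conj_I] <;>
    ring

/-- `(1/2) Σ_{α=0}^{3} ⟨ψ, σ_α ψ⟩^{2n} = ⟨Ψ, Λ^{(n)} Ψ⟩` with `Ψ = (ψ ⊗ ψ̄)^{⊗n}`. -/
theorem lambda_single_qubit_moments (n : ℕ) (hn : 1 ≤ n) (ψ : Fin 2 → ℂ) :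
    ((1:ℂ)/2) * ∑ α : Fin 4, (star ψ ⬝ᵥ (σ α *ᵥ ψ))^(2*n) =
      star (replicaVec n ψ) ⬝ᵥ (Lambda n *ᵥ replicaVec n ψ) := by
  set G : Fin 4 → (Fin 2 × Fin 2) → (Fin 2 × Fin 2) → ℂ :=
    fun α p q => ((conj (ψ p.1) * ψ p.2) * (σ α p.1 q.1 * conj (σ α p.2 q.2))) *
      (ψ q.1 * conj (ψ q.2)) with hG
  have step1 : ∀ α : Fin 4,
      ∑ s : Fin (2*n) → Fin 2, ∑ t : Fin (2*n) → Fin 2,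
        ∏ k : Fin n,
          G α (s ⟨2*k.val, by have := k.isLt; omega⟩, s ⟨2*k.val+1, by have := k.isLt; omega⟩)
            (t ⟨2*k.val, by have := k.isLt; omega⟩, t ⟨2*k.val+1, by have := k.isLt; omega⟩)
        = (star ψ ⬝ᵥ (σ α *ᵥ ψ))^(2*n) := by
    intro α
    rw [key2 n (G α)]
    have hsum : ∑ p : Fin 2 × Fin 2, ∑ q : Fin 2 × Fin 2, G α p q
        = (star ψ ⬝ᵥ (σ α *ᵥ ψ)) * conj (star ψ ⬝ᵥ (σ α *ᵥ ψ)) := by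
      simp only [hG, Fintype.sum_prod_type, dotProduct, Matrix.mulVec,
        Fin.sum_univ_two, Pi.star_apply, RCLike.star_def, map_add, map_mul,
        Complex.conj_conj]
      ring
    rw [hsum, herm, ← sq, ← pow_mul]
  have step2 : star (replicaVec n ψ) ⬝ᵥ (Lambda n *ᵥ replicaVec n ψ)
      = ((1:ℂ)/2) * ∑ α : Fin 4, ∑ s : Fin (2*n) → Fin 2, ∑ t : Fin (2*n) → Fin 2,
        ∏ k : Fin n,
          G α (s ⟨2*k.val, by have := k.isLt; omega⟩, s ⟨2*k.val+1, by have := k.isLt; omega⟩)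
            (t ⟨2*k.val, by have := k.isLt; omega⟩, t ⟨2*k.val+1, by have := k.isLt; omega⟩) := by
    simp only [dotProduct, Matrix.mulVec, Lambda, replicaVec, Pi.star_apply,
      RCLike.star_def, Finset.mul_sum, Finset.sum_mul]
    rw [sum3]
    apply Finset.sum_congr rfl
    intro α _
    rw [Finset.sum_comm]
    apply Finset.sum_congr rfl
    intro s _
    apply Finset.sum_congr rfl
    intro t _
    rw [map_prod]
    rw [show ∀ A B C : ℂ, A * ((1/2 * B) * C) = 1/2 * ((A * B) * C) from
      fun A B C => by ring]
    rw [← Finset.prod_mul_distrib, ← Finset.prod_mul_distrib]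
    congr 1
    apply Fintype.prod_congr
    intro k
    simp only [hG, map_mul, Complex.conj_conj]
    try ring
  rw [step2]
  exact congrArg (((1:ℂ)/2) * ·) (Finset.sum_congr rfl fun α _ => (step1 α).symm)
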